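/- arXiv:2411.09519 — 5 statements merged into one kernel-verified Lean document; each statement's English description precedes it below -/
import Mathlib

section
/- Let 0 < p* < 1, let π : ℝ → ℝ be continuously differentiable on [0,1] with π monotonically decreasing on [0,1], π(0) = 1, 0 ≤ π(p) ≤ 1 for all p ∈ [0,1], and π(p) = 0 for all p ∈ [p*,1]. Let r ∈ (0,1) and ε ∈ [0,1], and define f(P) = -r - ε·(deriv π P)·(1-P) + π(P). Then there exists P ∈ [0,1] with f(P) = 0, i.e., the adaptive dynamics Ṗ = f(P) has at least one equilibrium point. -/
open Set Filter Topology

/-- The adaptive dynamics `Ṗ = f(P)` with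
`f(P) = -r - ε·π'(P)·(1-P) + π(P)` has at least one equilibrium in `[0,1]`. -/
theorem adaptive_dynamics_exists_equilibrium
    (pstar : ℝ) (hp0 : 0 < pstar) (hp1 : pstar < 1)
    (π : ℝ → ℝ)
    (hC1 : ContDiffOn ℝ 1 π (Icc 0 1))
    (hmono : AntitoneOn π (Icc 0 1))
    (hπ0 : π 0 = 1)
    (hbd : ∀ p ∈ Icc (0:ℝ) 1, 0 ≤ π p ∧ π p ≤ 1)
    (hvanish : ∀ p ∈ Icc pstar 1, π p = 0)
    (r ε : ℝ) (hr : r ∈ Ioo (0:ℝ) 1) (hε : ε ∈ Icc (0:ℝ) 1)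
    (f : ℝ → ℝ)
    (hf : ∀ P, f P = -r - ε * deriv π P * (1 - P) + π P) :
    ∃ P ∈ Icc (0:ℝ) 1, f P = 0 := by
  obtain ⟨hr0, hr1⟩ := hr
  obtain ⟨hε0, hε1⟩ := hε
  -- choose `a ∈ (0, pstar)` with `π a > r`
  have hne : (𝓝[Ioo (0:ℝ) 1] 0).NeBot := by
    rw [← mem_closure_iff_nhdsWithin_neBot, closure_Ioo (by norm_num : (0:ℝ) ≠ 1)]
    exact ⟨le_rfl, by norm_num⟩
  have htend : Tendsto π (𝓝[Ioo (0:ℝ) 1] 0) (𝓝 1) := by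
    have h := (hC1.continuousOn 0 ⟨le_rfl, by norm_num⟩).tendsto.mono_left
      (nhdsWithin_mono _ Ioo_subset_Icc_self)
    rwa [hπ0] at h
  have hev1 : ∀ᶠ x in 𝓝[Ioo (0:ℝ) 1] 0, r < π x :=
    htend (Ioi_mem_nhds hr1)
  have hev2 : ∀ᶠ x in 𝓝[Ioo (0:ℝ) 1] 0, x < pstar :=
    eventually_nhdsWithin_of_eventually_nhds (Filter.Tendsto.eventually_lt_const hp0 tendsto_id)
  obtain ⟨a, hra, hapstar, ha0, ha1⟩ := (hev1.and (hev2.and self_mem_nhdsWithin)).exists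
  -- set `b`
  set b : ℝ := (pstar + 1) / 2 with hb
  have hpb : pstar < b := by simp only [hb]; linarith
  have hb1 : b < 1 := by simp only [hb]; linarith
  have hab : a < b := lt_trans hapstar hpb
  have hb0 : 0 < b := lt_trans hp0 hpb
  -- π and deriv π vanish at b
  have hπb : π b = 0 := hvanish b ⟨le_of_lt hpb, le_of_lt hb1⟩
  have hdπb : deriv π b = 0 := by
    have hev : π =ᶠ[𝓝 b] fun _ => (0:ℝ) := by
      filter_upwards [Ioo_mem_nhds hpb hb1] with x hx
      exact hvanish x ⟨le_of_lt hx.1, le_of_lt hx.2⟩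
    rw [hev.deriv_eq, deriv_const]
  -- differentiability at interior points
  have hdiff : ∀ x ∈ Ioo (0:ℝ) 1, DifferentiableAt ℝ π x := fun x hx =>
    ((hC1.differentiableOn one_ne_zero) x ⟨le_of_lt hx.1, le_of_lt hx.2⟩).differentiableAt
      (Icc_mem_nhds hx.1 hx.2)
  -- deriv π a ≤ 0
  have hda : deriv π a ≤ 0 := by
    have hd : HasDerivWithinAt π (deriv π a) (Ioo a 1) a :=
      ((hdiff a ⟨ha0, ha1⟩).hasDerivAt).hasDerivWithinAt
    have hslope := hasDerivWithinAt_iff_tendsto_slope.mp hd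
    have hsdiff : Ioo a 1 \ {a} = Ioo a 1 := by
      apply diff_singleton_eq_self; simp
    rw [hsdiff] at hslope
    have hneb : (𝓝[Ioo a 1] a).NeBot := by
      rw [← mem_closure_iff_nhdsWithin_neBot, closure_Ioo (ne_of_lt ha1)]
      exact ⟨le_rfl, le_of_lt ha1⟩
    refine le_of_tendsto hslope ?_
    filter_upwards [self_mem_nhdsWithin] with x hx
    have hxa : π x ≤ π a :=
      hmono ⟨le_of_lt ha0, le_of_lt ha1⟩ ⟨le_trans (le_of_lt ha0) (le_of_lt hx.1), le_of_lt hx.2⟩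
        (le_of_lt hx.1)
    rw [slope_def_field]
    exact div_nonpos_of_nonpos_of_nonneg (by linarith) (by linarith [hx.1])
  -- sign of f at the endpoints
  have hfa : 0 < f a := by
    have h1 : ε * deriv π a * (1 - a) ≤ 0 :=
      mul_nonpos_of_nonpos_of_nonneg (mul_nonpos_of_nonneg_of_nonpos hε0 hda) (by linarith)
    rw [hf a]; linarith
  have hfb : f b < 0 := by rw [hf b, hdπb, hπb]; ring_nf; linarith
  -- continuity of f on [a,b]
  have hsub : Icc a b ⊆ Ioo (0:ℝ) 1 := fun x hx => ⟨lt_of_lt_of_le ha0 hx.1, lt_of_le_of_lt hx.2 hb1⟩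
  set g : ℝ → ℝ := derivWithin π (Icc 0 1) with hg
  have hgcont : ContinuousOn g (Icc 0 1) :=
    hC1.continuousOn_derivWithin (uniqueDiffOn_Icc (by norm_num)) le_rfl
  have hcont : ContinuousOn f (Icc a b) := by
    have heq : EqOn f (fun P => -r - ε * g P * (1 - P) + π P) (Icc a b) := by
      intro x hx
      have hx' := hsub hx
      show f x = -r - ε * derivWithin π (Icc 0 1) x * (1 - x) + π x
      rw [hf x, derivWithin_of_mem_nhds (Icc_mem_nhds hx'.1 hx'.2)]
    refine ContinuousOn.congr ?_ heq
    have hsub' : Icc a b ⊆ Icc (0:ℝ) 1 := fun x hx => Ioo_subset_Icc_self (hsub hx)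
    exact (((continuousOn_const.sub ((continuousOn_const.mul (hgcont.mono hsub')).mul
      (continuousOn_const.sub continuousOn_id))).add (hC1.continuousOn.mono hsub')))
  -- intermediate value theorem
  have h0mem : (0:ℝ) ∈ Icc (f b) (f a) := ⟨le_of_lt hfb, le_of_lt hfa⟩
  obtain ⟨P, hP, hfP⟩ := intermediate_value_Icc' (le_of_lt hab) hcont h0mem
  exact ⟨P, ⟨le_trans (le_of_lt ha0) hP.1, le_trans hP.2 (le_of_lt hb1)⟩, hfP⟩
end

section
/- Let 0 < p* < 1, let π : ℝ → ℝ be twice continuously differentiable on [0,1] with π convex on [0,1], π'(p) < 0 for all p ∈ [0,p*), π(0) = 1, 0 ≤ π(p) ≤ 1 for all p ∈ [0,1], and π(p) = 0 for all p ∈ [p*,1]. Let r ∈ (0,1) and ε ∈ [0,1], and define f(P) = -r - ε·(deriv π P)·(1-P) + π(P). Then f has exactly one zero P₀ in [0,1], i.e., the adaptive dynamics Ṗ = f(P) has a unique equilibrium. -/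
open Set

/-- Under convexity of `π` and strict decrease on `[0,p*)`, the adaptive
dynamics `Ṗ = f(P)` has a unique equilibrium in `[0,1]`. -/
theorem adaptive_dynamics_unique_equilibrium
    (pstar : ℝ) (hp0 : 0 < pstar) (hp1 : pstar < 1)
    (π : ℝ → ℝ)
    (hC2 : ContDiffOn ℝ 2 π (Icc 0 1))
    (hconv : ConvexOn ℝ (Icc 0 1) π)
    (hπ' : ∀ p ∈ Ico (0:ℝ) pstar, deriv π p < 0)
    (hπ0 : π 0 = 1)
    (hbd : ∀ p ∈ Icc (0:ℝ) 1, 0 ≤ π p ∧ π p ≤ 1)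
    (hvanish : ∀ p ∈ Icc pstar 1, π p = 0)
    (r ε : ℝ) (hr : r ∈ Ioo (0:ℝ) 1) (hε : ε ∈ Icc (0:ℝ) 1)
    (f : ℝ → ℝ)
    (hf : ∀ P, f P = -r - ε * deriv π P * (1 - P) + π P) :
    ∃! P₀, P₀ ∈ Icc (0:ℝ) 1 ∧ f P₀ = 0 := by
  have h01 : (0:ℝ) < 1 := one_pos
  have hud : UniqueDiffOn ℝ (Icc (0:ℝ) 1) := uniqueDiffOn_Icc h01
  have hdiff : DifferentiableOn ℝ π (Icc 0 1) := hC2.differentiableOn (by norm_num)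
  set D : ℝ → ℝ := derivWithin π (Icc 0 1) with hD
  have hDcont : ContinuousOn D (Icc 0 1) := hC2.continuousOn_derivWithin hud (by norm_num)
  -- on the interior, D agrees with deriv
  have hint : ∀ p ∈ Ioo (0:ℝ) 1, D p = deriv π p := by
    intro p hp
    exact derivWithin_of_mem_nhds (Icc_mem_nhds hp.1 hp.2)
  -- π is differentiable (in the full sense) at 0
  have hdiff0 : DifferentiableAt ℝ π 0 := by
    by_contra h
    have := deriv_zero_of_not_differentiableAt h
    have h0 := hπ' 0 ⟨le_refl 0, hp0⟩
    rw [this] at h0; exact lt_irrefl 0 h0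
  have hD0 : D 0 = deriv π 0 := hdiff0.derivWithin (hud 0 ⟨le_refl 0, h01.le⟩)
  -- deriv π vanishes on [pstar, 1)
  have hDz : ∀ b ∈ Ico pstar 1, deriv π b = 0 := by
    intro b hb
    have hb0 : (0:ℝ) < b := lt_of_lt_of_le hp0 hb.1
    have hdb : DifferentiableAt ℝ π b :=
      (hdiff b ⟨hb0.le, hb.2.le⟩).differentiableAt (Icc_mem_nhds hb0 hb.2)
    have hudb : UniqueDiffWithinAt ℝ (Icc b 1) b :=
      (uniqueDiffOn_Icc hb.2) b ⟨le_refl b, hb.2.le⟩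
    have h1 : derivWithin π (Icc b 1) b = deriv π b := hdb.derivWithin hudb
    have h2 : derivWithin π (Icc b 1) b = derivWithin (fun _ => (0:ℝ)) (Icc b 1) b := by
      apply derivWithin_congr
      · intro x hx
        exact hvanish x ⟨le_trans hb.1 hx.1, hx.2⟩
      · exact hvanish b ⟨hb.1, hb.2.le⟩
    rw [h2, derivWithin_fun_const _ _] at h1
    exact h1.symm
  -- D is monotone on [0,1] by convexity
  have hmono : MonotoneOn D (Icc 0 1) := hconv.monotoneOn_derivWithin hdiff
  -- π is strictly decreasing on [0, pstar]
  have hanti : StrictAntiOn π (Icc 0 pstar) := by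
    apply strictAntiOn_of_deriv_neg (convex_Icc 0 pstar)
      (hC2.continuousOn.mono (Icc_subset_Icc le_rfl hp1.le))
    intro x hx
    rw [interior_Icc] at hx
    exact hπ' x ⟨hx.1.le, hx.2⟩
  -- the continuous surrogate g
  set g : ℝ → ℝ := fun P => -r - ε * D P * (1 - P) + π P with hg
  have hfg : ∀ P ∈ Icc (0:ℝ) 1, f P = g P := by
    intro P hP
    rcases eq_or_lt_of_le hP.1 with h0 | h0
    · simp only [hg, hf, ← h0, hD0]
    rcases eq_or_lt_of_le hP.2 with h1 | h1
    · simp only [hg, hf, h1, sub_self, mul_zero]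
    · simp only [hg, hf, hint P ⟨h0, h1⟩]
  have hgc : ContinuousOn g (Icc 0 1) := by
    apply ContinuousOn.add _ hC2.continuousOn
    exact continuousOn_const.sub ((continuousOn_const.mul hDcont).mul
      (continuousOn_const.sub continuousOn_id))
  have hπ1 : π 1 = 0 := hvanish 1 ⟨hp1.le, le_refl 1⟩
  have hg0 : 0 < g 0 := by
    have h1 : deriv π 0 < 0 := hπ' 0 ⟨le_refl 0, hp0⟩
    have h2 : ε * D 0 ≤ 0 := mul_nonpos_of_nonneg_of_nonpos hε.1 (hD0 ▸ h1.le)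
    simp only [hg]
    rw [hπ0]
    nlinarith [hr.2]
  have hg1 : g 1 < 0 := by
    simp only [hg, sub_self, mul_zero, hπ1]
    linarith [hr.1]
  -- key decrease property
  have key : ∀ a ∈ Icc (0:ℝ) 1, ∀ b ∈ Icc (0:ℝ) 1, a < b → g a = 0 → g b < 0 := by
    intro a ha b hb hab hga
    rcases le_or_gt pstar b with hbp | hbp
    · -- b ≥ pstar : g b = -r < 0
      rcases eq_or_lt_of_le hb.2 with h1 | h1
      · simp only [hg, h1, sub_self, mul_zero, hπ1]
        linarith [hr.1]
      · have hDb : D b = 0 := by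
          rw [hint b ⟨lt_of_lt_of_le hp0 hbp, h1⟩]
          exact hDz b ⟨hbp, h1⟩
        simp only [hg, hDb, mul_zero, zero_mul, hvanish b ⟨hbp, hb.2⟩]
        linarith [hr.1]
    · -- a < b < pstar
      have hb0 : (0:ℝ) < b := lt_of_le_of_lt ha.1 hab
      have hπab : π b < π a :=
        hanti ⟨ha.1, (le_of_lt (lt_trans hab hbp))⟩ ⟨hb0.le, hbp.le⟩ hab
      have hDab : D a ≤ D b := hmono ha hb hab.le
      have hDbneg : D b ≤ 0 := by
        rw [hint b ⟨hb0, hb.2.lt_of_ne (by rintro rfl; linarith)⟩]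
        exact (hπ' b ⟨hb0.le, hbp⟩).le
      have h1 : 0 ≤ D b * (a - b) := by nlinarith [mul_nonneg (neg_nonneg.2 hDbneg) (sub_nonneg.2 hab.le)]
      have h2 : 0 ≤ (D b - D a) * (1 - a) := mul_nonneg (by linarith) (by linarith [ha.2])
      have hq : 0 ≤ D b * (1 - b) - D a * (1 - a) := by nlinarith
      have hεq : 0 ≤ ε * (D b * (1 - b) - D a * (1 - a)) := mul_nonneg hε.1 hq
      have : g b = g a + (π b - π a) - ε * (D b * (1 - b) - D a * (1 - a)) := by
        simp only [hg]; ring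
      rw [this, hga]
      linarith
  -- existence by IVT
  have hivt := intermediate_value_Icc' (le_of_lt h01) hgc
  have h0mem : (0:ℝ) ∈ Icc (g 1) (g 0) := ⟨hg1.le, hg0.le⟩
  obtain ⟨c, hc, hgceq⟩ := hivt h0mem
  refine ⟨c, ⟨hc, by rw [hfg c hc]; exact hgceq⟩, ?_⟩
  intro d ⟨hd, hfd⟩
  have hgd : g d = 0 := by rw [← hfg d hd]; exact hfd
  rcases lt_trichotomy d c with h | h | h
  · exact absurd hgceq (ne_of_lt (key d hd c hc h hgd))
  · exact h
  · exact absurd hgd (ne_of_lt (key c hc d hd h hgceq))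
end

section
/- Let 0 < p* < 1, let π : ℝ → ℝ be twice continuously differentiable on [0,1] with π convex on [0,1], π'(p) < 0 for all p ∈ [0,p*), π(0) = 1, 0 ≤ π(p) ≤ 1 for all p ∈ [0,1], and π(p) = 0 for all p ∈ [p*,1]. Let r ∈ (0,1) and ε ∈ [0,1], define f(P) = -r - ε·(deriv π P)·(1-P) + π(P), and let P₀ ∈ [0,1] be the unique zero of f. Then f'(P₀) < 0; that is, the unique equilibrium P₀ of the adaptive dynamics Ṗ = f(P) is (linearly) stable, hence a Nash equilibrium. -/
open Set

/-- Under convexity of `π` and strict decrease on `[0,p*)`, the unique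
equilibrium `P₀` of the adaptive dynamics satisfies `f'(P₀) < 0`,
i.e. it is linearly stable (a Nash equilibrium). -/
theorem adaptive_dynamics_unique_equilibrium_stable
    (pstar : ℝ) (hp0 : 0 < pstar) (hp1 : pstar < 1)
    (π : ℝ → ℝ)
    (hC2 : ContDiffOn ℝ 2 π (Icc 0 1))
    (hconv : ConvexOn ℝ (Icc 0 1) π)
    (hπ' : ∀ p ∈ Ico (0:ℝ) pstar, deriv π p < 0)
    (hπ0 : π 0 = 1)
    (hbd : ∀ p ∈ Icc (0:ℝ) 1, 0 ≤ π p ∧ π p ≤ 1)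
    (hvanish : ∀ p ∈ Icc pstar 1, π p = 0)
    (r ε : ℝ) (hr : r ∈ Ioo (0:ℝ) 1) (hε : ε ∈ Icc (0:ℝ) 1)
    (f : ℝ → ℝ)
    (hf : ∀ P, f P = -r - ε * deriv π P * (1 - P) + π P)
    (P₀ : ℝ) (hP₀ : P₀ ∈ Icc (0:ℝ) 1) (hfP₀ : f P₀ = 0)
    (huniq : ∀ P ∈ Icc (0:ℝ) 1, f P = 0 → P = P₀) :
    deriv f P₀ < 0 := by
  obtain ⟨hr0, hr1⟩ := hr
  obtain ⟨hε0, hε1⟩ := hε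
  -- π is C² on the open interval (0,1)
  have hC2' : ContDiffOn ℝ 2 π (Ioo 0 1) := hC2.mono Ioo_subset_Icc_self
  have hπdiff : ∀ x ∈ Ioo (0:ℝ) 1, DifferentiableAt ℝ π x := by
    intro x hx
    exact ((hC2' x hx).contDiffAt (isOpen_Ioo.mem_nhds hx)).differentiableAt (by norm_num)
  have hg1 : ContDiffOn ℝ 1 (deriv π) (Ioo 0 1) := by
    have := hC2'.deriv_of_isOpen isOpen_Ioo (m := 1) (by norm_num)
    exact this
  -- deriv π vanishes on (p*, 1)
  have hder0 : ∀ t ∈ Ioo pstar 1, deriv π t = 0 := by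
    intro t ht
    have hev : π =ᶠ[nhds t] fun _ => (0:ℝ) := by
      filter_upwards [isOpen_Ioo.mem_nhds ht] with u hu
      exact hvanish u ⟨hu.1.le, hu.2.le⟩
    rw [hev.deriv_eq, deriv_const]
  -- deriv π pstar = 0 by continuity
  have hderps : deriv π pstar = 0 := by
    have hmem : pstar ∈ Ioo (0:ℝ) 1 := ⟨hp0, hp1⟩
    have hcont : ContinuousAt (deriv π) pstar :=
      (hC2'.continuousOn_deriv_of_isOpen isOpen_Ioo (by norm_num)).continuousAt
        (isOpen_Ioo.mem_nhds hmem)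
    have h1 : Filter.Tendsto (deriv π) (nhdsWithin pstar (Ioi pstar)) (nhds (deriv π pstar)) :=
      hcont.tendsto.mono_left nhdsWithin_le_nhds
    have h2 : Filter.Tendsto (deriv π) (nhdsWithin pstar (Ioi pstar)) (nhds 0) := by
      have hev : ∀ᶠ t in nhdsWithin pstar (Ioi pstar), deriv π t = 0 := by
        filter_upwards [Ioo_mem_nhdsGT_of_mem ⟨le_refl pstar, hp1⟩] with t ht
        exact hder0 t ht
      exact Filter.Tendsto.congr' (Filter.EventuallyEq.symm hev) tendsto_const_nhds
    exact tendsto_nhds_unique h1 h2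
  -- P₀ < pstar
  have hPlt : P₀ < pstar := by
    by_contra hge
    push_neg at hge
    have hπP : π P₀ = 0 := hvanish P₀ ⟨hge, hP₀.2⟩
    rcases eq_or_lt_of_le hP₀.2 with h1' | h1'
    · -- P₀ = 1
      have : f P₀ = -r := by rw [hf, hπP, h1']; ring
      rw [this] at hfP₀; linarith
    · have hd0 : deriv π P₀ = 0 := by
        rcases eq_or_lt_of_le hge with he | he
        · rw [← he]; exact hderps
        · exact hder0 P₀ ⟨he, h1'⟩
      have : f P₀ = -r := by rw [hf, hπP, hd0]; ring
      rw [this] at hfP₀; linarith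
  -- P₀ > 0
  have hPpos : 0 < P₀ := by
    rcases eq_or_lt_of_le hP₀.1 with h0' | h0'
    · exfalso
      have hd0 : deriv π 0 < 0 := hπ' 0 ⟨le_refl 0, hp0⟩
      have : f 0 = -r - ε * deriv π 0 * (1 - 0) + π 0 := hf 0
      rw [hπ0] at this
      have hεd : ε * deriv π 0 ≤ 0 := mul_nonpos_of_nonneg_of_nonpos hε0 hd0.le
      rw [← h0'] at hfP₀
      nlinarith
    · exact h0'
  have hPmem : P₀ ∈ Ioo (0:ℝ) 1 := ⟨hPpos, lt_trans hPlt hp1⟩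
  -- the derivative of π at P₀ is negative
  have hgneg : deriv π P₀ < 0 := hπ' P₀ ⟨hP₀.1, hPlt⟩
  -- monotonicity of deriv π on (0,1) from convexity
  have hmono : MonotoneOn (deriv π) (Ioo 0 1) :=
    (hconv.subset Ioo_subset_Icc_self (convex_Ioo 0 1)).monotoneOn_deriv hπdiff
  -- deriv π is differentiable at P₀
  have hgdiff : DifferentiableAt ℝ (deriv π) P₀ :=
    ((hg1 P₀ hPmem).contDiffAt (isOpen_Ioo.mem_nhds hPmem)).differentiableAt (by norm_num)
  -- second derivative nonneg
  have hg'nonneg : 0 ≤ deriv (deriv π) P₀ := by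
    have hslope : Filter.Tendsto (slope (deriv π) P₀) (nhdsWithin P₀ (Ioi P₀))
        (nhds (deriv (deriv π) P₀)) :=
      (hasDerivAt_iff_tendsto_slope.mp hgdiff.hasDerivAt).mono_left
        (nhdsWithin_mono _ (fun x hx => ne_of_gt hx))
    refine ge_of_tendsto hslope ?_
    filter_upwards [Ioo_mem_nhdsGT_of_mem ⟨le_refl P₀, hPmem.2⟩] with t ht
    have htmem : t ∈ Ioo (0:ℝ) 1 := ⟨lt_trans hPpos ht.1, ht.2⟩
    have := hmono hPmem htmem ht.1.le
    have hpos : 0 < t - P₀ := sub_pos.mpr ht.1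
    rw [slope_def_field]
    exact div_nonneg (by linarith) hpos.le
  -- compute deriv f P₀
  have hπd : HasDerivAt π (deriv π P₀) P₀ := (hπdiff P₀ hPmem).hasDerivAt
  have hgd : HasDerivAt (deriv π) (deriv (deriv π) P₀) P₀ := hgdiff.hasDerivAt
  have h1 : HasDerivAt (fun P => ε * deriv π P) (ε * deriv (deriv π) P₀) P₀ :=
    hgd.const_mul ε
  have h2 : HasDerivAt (fun P => (1:ℝ) - P) (-1) P₀ := by
    simpa using (hasDerivAt_id P₀).const_sub (1:ℝ)
  have h3 : HasDerivAt (fun P => ε * deriv π P * (1 - P))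
      (ε * deriv (deriv π) P₀ * (1 - P₀) + ε * deriv π P₀ * (-1)) P₀ := h1.mul h2
  have h4 : HasDerivAt (fun x => -r - ε * deriv π x * (1 - x) + π x)
      (0 - (ε * deriv (deriv π) P₀ * (1 - P₀) + ε * deriv π P₀ * (-1)) + deriv π P₀) P₀ :=
    ((hasDerivAt_const P₀ (-r)).sub h3).add hπd
  have hfe : f = fun x => -r - ε * deriv π x * (1 - x) + π x := funext hf
  rw [hfe, h4.deriv]
  have hA : 0 ≤ ε * deriv (deriv π) P₀ * (1 - P₀) := by
    have : (0:ℝ) ≤ 1 - P₀ := by linarith [hPmem.2]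
    positivity
  nlinarith
end

section
/- Let 0 < p* < 1, let π : ℝ → ℝ be continuously differentiable on [0,1] with π monotonically decreasing on [0,1], π'(p) < 0 for all p ∈ [0,p*), π(0) = 1, 0 ≤ π(p) ≤ 1 for all p ∈ [0,1], and π(p) = 0 for all p ∈ [p*,1]. Let r ∈ (0,1) and ε ∈ (0,1], and define f(P) = -r - ε·(deriv π P)·(1-P) + π(P). Then every P ∈ [0,1] with f(P) = 0 satisfies π(P) < r; in particular, every equilibrium P is strictly greater than any point Q ∈ [0,1] with π(Q) = r. -/
open Set

/-- Every equilibrium `P` of the adaptive dynamics satisfies `π(P) < r`;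
in particular it is strictly greater than any point `Q ∈ [0,1]` with
`π(Q) = r`. -/
theorem adaptive_dynamics_equilibrium_lower_bound
    (pstar : ℝ) (hp0 : 0 < pstar) (hp1 : pstar < 1)
    (π : ℝ → ℝ)
    (hC1 : ContDiffOn ℝ 1 π (Icc 0 1))
    (hmono : AntitoneOn π (Icc 0 1))
    (hπ' : ∀ p ∈ Ico (0:ℝ) pstar, deriv π p < 0)
    (hπ0 : π 0 = 1)
    (hbd : ∀ p ∈ Icc (0:ℝ) 1, 0 ≤ π p ∧ π p ≤ 1)
    (hvanish : ∀ p ∈ Icc pstar 1, π p = 0)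
    (r ε : ℝ) (hr : r ∈ Ioo (0:ℝ) 1) (hε : ε ∈ Ioc (0:ℝ) 1)
    (f : ℝ → ℝ)
    (hf : ∀ P, f P = -r - ε * deriv π P * (1 - P) + π P) :
    ∀ P ∈ Icc (0:ℝ) 1, f P = 0 →
      π P < r ∧ ∀ Q ∈ Icc (0:ℝ) 1, π Q = r → Q < P := by
  intro P hP hfP
  have key : π P < r := by
    rcases lt_or_ge P pstar with h | h
    · have hd := hπ' P ⟨hP.1, h⟩
      have h1P : 0 < 1 - P := by linarith [hP.2]
      have hneg : ε * deriv π P * (1 - P) < 0 :=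
        mul_neg_of_neg_of_pos (mul_neg_of_pos_of_neg hε.1 hd) h1P
      have heq := hf P
      rw [hfP] at heq
      linarith
    · have h0 := hvanish P ⟨h, hP.2⟩
      linarith [hr.1]
  refine ⟨key, fun Q hQ hQr => ?_⟩
  by_contra hc
  push_neg at hc
  have := hmono hP hQ hc
  linarith
end

section
/- Let 0 < p* < 1, let π : ℝ → ℝ be twice continuously differentiable on [0,1] with π monotonically decreasing on [0,1], π(0) = 1, 0 ≤ π(p) ≤ 1 for all p ∈ [0,1], and π(p) = 0 for all p ∈ [p*,1]. Let r ∈ (0,1) and ε ∈ [0,1], and define f(P) = -r - ε·(deriv π P)·(1-P) + π(P). Assume every zero of f in [0,1] is nondegenerate, i.e., f(P) = 0 implies f'(P) ≠ 0 for P ∈ [0,1]. Then the set of zeros of f in [0,1] is finite and has odd cardinality. -/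
open Set

lemma no_zero_pos {F : ℝ → ℝ} {u v : ℝ} (huv : u ≤ v)
    (hc : ContinuousOn F (Icc u v)) (hu : 0 < F u)
    (hz : ∀ x ∈ Ioc u v, F x ≠ 0) : ∀ x ∈ Icc u v, 0 < F x := by
  intro x hx
  by_contra h
  push_neg at h
  rcases eq_or_lt_of_le hx.1 with rfl | hux
  · exact absurd hu (not_lt.2 h)
  have hFx : F x < 0 := lt_of_le_of_ne h (hz x ⟨hux, hx.2⟩)
  have hsub : Icc u x ⊆ Icc u v := Icc_subset_Icc le_rfl hx.2
  obtain ⟨y, hy, hFy⟩ := intermediate_value_Icc' hux.le (hc.mono hsub) ⟨hFx.le, hu.le⟩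
  have hyu : u < y := lt_of_le_of_ne hy.1 (by rintro rfl; exact hu.ne' hFy)
  exact hz y ⟨hyu, hy.2.trans hx.2⟩ hFy

lemma no_zero_neg {F : ℝ → ℝ} {u v : ℝ} (huv : u ≤ v)
    (hc : ContinuousOn F (Icc u v)) (hu : F u < 0)
    (hz : ∀ x ∈ Ioc u v, F x ≠ 0) : ∀ x ∈ Icc u v, F x < 0 := by
  intro x hx
  have := no_zero_pos huv hc.neg (by simpa using hu)
    (fun y hy => by simpa using hz y hy) x hx
  simpa using this

lemma parity_aux : ∀ n : ℕ, ∀ (F : ℝ → ℝ) (a b : ℝ), a < b →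
    ContinuousOn F (Icc a b) → 0 < F a → F b < 0 →
    (∀ z ∈ Icc a b, F z = 0 → ∃ δ > 0, ∃ s : ℝ, (s = 1 ∨ s = -1) ∧
       ∀ x ∈ Ioo (z - δ) (z + δ), x ≠ z → 0 < s * (F x * (x - z))) →
    ∀ hfin : {x | x ∈ Icc a b ∧ F x = 0}.Finite,
      {x | x ∈ Icc a b ∧ F x = 0}.ncard = n → Odd n := by
  intro n
  induction n using Nat.strong_induction_on with
  | _ n IH =>
  intro F a b hab hc ha hb hchg hfin hn
  set Z : Set ℝ := {x | x ∈ Icc a b ∧ F x = 0} with hZ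
  -- Z is nonempty by IVT
  have hZne : Z.Nonempty := by
    obtain ⟨z, hz, hFz⟩ := intermediate_value_Icc' hab.le hc ⟨hb.le, ha.le⟩
    exact ⟨z, hz, hFz⟩
  -- the minimal zero
  have hFsne : hfin.toFinset.Nonempty := by
    simpa [Set.Finite.toFinset_nonempty] using hZne
  set z₁ : ℝ := hfin.toFinset.min' hFsne with hz₁def
  have hz₁Z : z₁ ∈ Z := by
    have := hfin.toFinset.min'_mem hFsne
    simpa using this
  have hz₁min : ∀ z ∈ Z, z₁ ≤ z := by
    intro z hz
    exact hfin.toFinset.min'_le z (by simpa using hz)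
  have haz₁ : a < z₁ := hz₁Z.1.1.lt_of_ne
    (fun h => absurd (show F a = 0 by rw [h]; exact hz₁Z.2) ha.ne')
  have hz₁b : z₁ < b := hz₁Z.1.2.lt_of_ne
    (fun h => absurd (show F b = 0 by rw [← h]; exact hz₁Z.2) hb.ne)
  -- F positive on [a, z₁)
  have hpos : ∀ x ∈ Ico a z₁, 0 < F x := by
    intro x hx
    exact no_zero_pos hx.1 (hc.mono (Icc_subset_Icc le_rfl (hx.2.le.trans hz₁b.le))) ha
      (fun y hy hFy => absurd
        (hz₁min y ⟨⟨hy.1.le, (hy.2.trans_lt hx.2).le.trans hz₁b.le⟩, hFy⟩)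
        (not_le.2 (hy.2.trans_lt hx.2)))
      x ⟨hx.1, le_rfl⟩
  obtain ⟨δ₁, hδ₁, s₁, hs₁, hsgn₁⟩ := hchg z₁ hz₁Z.1 hz₁Z.2
  set x₀ : ℝ := max a (z₁ - δ₁ / 2) with hx₀def
  have hx₀lt : x₀ < z₁ := max_lt haz₁ (by linarith)
  have hx₀mem : x₀ ∈ Ioo (z₁ - δ₁) (z₁ + δ₁) :=
    ⟨lt_of_lt_of_le (by linarith) (le_max_right _ _), by linarith [hx₀lt]⟩
  have hFx₀ : 0 < F x₀ := hpos x₀ ⟨le_max_left _ _, hx₀lt⟩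
  have hs₁eq : s₁ = -1 := by
    rcases hs₁ with rfl | rfl
    · exfalso; have h1 := hsgn₁ x₀ hx₀mem hx₀lt.ne; nlinarith [hx₀lt]
    · rfl
  subst hs₁eq
  have hneg_right : ∀ x ∈ Ioo z₁ (z₁ + δ₁), F x < 0 := by
    intro x hx
    have h1 := hsgn₁ x ⟨by linarith [hx.1], hx.2⟩ (ne_of_gt hx.1)
    nlinarith [hx.1]
  by_cases hZ1 : Z = {z₁}
  · have hn1 : n = 1 := by rw [← hn, hZ1, Set.ncard_singleton]
    exact hn1 ▸ odd_one
  have hZ'ne : (Z \ {z₁}).Nonempty :=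
    Set.sdiff_nonempty.2 (fun hsub => hZ1 (Set.Subset.antisymm hsub (Set.singleton_subset_iff.2 hz₁Z)))
  have hfin' : (Z \ {z₁}).Finite := hfin.subset diff_subset
  have hFs'ne : hfin'.toFinset.Nonempty := by simpa [Set.Finite.toFinset_nonempty] using hZ'ne
  set z₂ : ℝ := hfin'.toFinset.min' hFs'ne with hz₂def
  have hz₂Z : z₂ ∈ Z \ {z₁} := by simpa using hfin'.toFinset.min'_mem hFs'ne
  have hz₂min : ∀ z ∈ Z \ {z₁}, z₂ ≤ z := fun z hz => hfin'.toFinset.min'_le z (by simpa using hz)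
  have hz₁z₂ : z₁ < z₂ := (hz₁min z₂ hz₂Z.1).lt_of_ne (fun h => hz₂Z.2 (by simp [← h]))
  have hz₂b : z₂ < b := hz₂Z.1.1.2.lt_of_ne
    (fun h => absurd (show F b = 0 by rw [← h]; exact hz₂Z.1.2) hb.ne)
  have hneg_mid : ∀ x ∈ Ioo z₁ z₂, F x < 0 := by
    intro x hx
    set y : ℝ := min ((z₁ + x)/2) (z₁ + δ₁/2) with hydef
    have hy1 : z₁ < y := lt_min (by linarith [hx.1]) (by linarith)
    have hy2 : y < x := (min_le_left _ _).trans_lt (by linarith [hx.1])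
    have hyF : F y < 0 := hneg_right y ⟨hy1, (min_le_right _ _).trans_lt (by linarith)⟩
    exact no_zero_neg hy2.le
      (hc.mono (Icc_subset_Icc (by linarith [haz₁, hy1]) (by linarith [hx.2, hz₂b]))) hyF
      (fun w hw hFw => absurd
        (hz₂min w ⟨⟨⟨by linarith [haz₁, hy1, hw.1], by linarith [hw.2, hx.2, hz₂b]⟩, hFw⟩,
          by simp only [Set.mem_singleton_iff]; exact (hy1.trans hw.1).ne'⟩)
        (not_le.2 (hw.2.trans_lt hx.2)))
      x ⟨hy2.le, le_rfl⟩
  obtain ⟨δ₂, hδ₂, s₂, hs₂, hsgn₂⟩ := hchg z₂ hz₂Z.1.1 hz₂Z.1.2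
  set x₁ : ℝ := max ((z₁ + z₂)/2) (z₂ - δ₂/2) with hx₁def
  have hx₁1 : z₁ < x₁ := lt_of_lt_of_le (by linarith [hz₁z₂]) (le_max_left _ _)
  have hx₁2 : x₁ < z₂ := max_lt (by linarith [hz₁z₂]) (by linarith)
  have hx₁mem : x₁ ∈ Ioo (z₂ - δ₂) (z₂ + δ₂) :=
    ⟨lt_of_lt_of_le (by linarith) (le_max_right _ _), by linarith [hx₁2]⟩
  have hFx₁ : F x₁ < 0 := hneg_mid x₁ ⟨hx₁1, hx₁2⟩
  have hs₂eq : s₂ = 1 := by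
    rcases hs₂ with rfl | rfl
    · rfl
    · exfalso; have h1 := hsgn₂ x₁ hx₁mem hx₁2.ne; nlinarith [hx₁2]
  subst hs₂eq
  have hpos_right : ∀ x ∈ Ioo z₂ (z₂ + δ₂), 0 < F x := by
    intro x hx
    have h1 := hsgn₂ x ⟨by linarith [hx.1], hx.2⟩ (ne_of_gt hx.1)
    nlinarith [hx.1]
  have hfin'' : (Z \ {z₁, z₂}).Finite := hfin.subset diff_subset
  by_cases hZ'' : (Z \ {z₁, z₂}) = ∅
  · exfalso
    set c : ℝ := min ((z₂ + b)/2) (z₂ + δ₂/2) with hcdef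
    have hc1 : z₂ < c := lt_min (by linarith [hz₂b]) (by linarith)
    have hc2 : c < b := (min_le_left _ _).trans_lt (by linarith [hz₂b])
    have hc3 : c < z₂ + δ₂ := (min_le_right _ _).trans_lt (by linarith)
    have hFc : 0 < F c := hpos_right c ⟨hc1, hc3⟩
    have hFb : 0 < F b := no_zero_pos hc2.le
      (hc.mono (Icc_subset_Icc (by linarith [haz₁, hz₁z₂, hc1]) le_rfl)) hFc
      (fun w hw hFw => by
        have hw₂ : z₂ < w := hc1.trans hw.1
        exact Set.eq_empty_iff_forall_notMem.1 hZ'' w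
          ⟨⟨⟨by linarith [haz₁, hz₁z₂], hw.2⟩, hFw⟩, by
            simp only [Set.mem_insert_iff, Set.mem_singleton_iff]
            push_neg
            exact ⟨((hz₁z₂.trans hw₂)).ne', hw₂.ne'⟩⟩)
      b ⟨hc2.le, le_rfl⟩
    linarith
  · have hZ''ne : (Z \ {z₁, z₂}).Nonempty := Set.nonempty_iff_ne_empty.2 hZ''
    have hFs''ne : hfin''.toFinset.Nonempty := by
      simpa [Set.Finite.toFinset_nonempty] using hZ''ne
    set z₃ : ℝ := hfin''.toFinset.min' hFs''ne with hz₃def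
    have hz₃Z : z₃ ∈ Z \ {z₁, z₂} := by simpa using hfin''.toFinset.min'_mem hFs''ne
    have hz₃min : ∀ z ∈ Z \ {z₁, z₂}, z₃ ≤ z :=
      fun z hz => hfin''.toFinset.min'_le z (by simpa using hz)
    have hz₃ne : z₃ ≠ z₁ ∧ z₃ ≠ z₂ := by
      have := hz₃Z.2
      simp only [Set.mem_insert_iff, Set.mem_singleton_iff] at this
      push_neg at this
      exact this
    have hz₂z₃ : z₂ < z₃ :=
      (hz₂min z₃ ⟨hz₃Z.1, by simp only [Set.mem_singleton_iff]; exact hz₃ne.1⟩).lt_of_ne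
        (fun h => hz₃ne.2 h.symm)
    set m : ℝ := min (min b (z₂ + δ₂)) z₃ with hmdef
    have hm : z₂ < m := lt_min (lt_min hz₂b (by linarith)) hz₂z₃
    set c : ℝ := (z₂ + m)/2 with hcdef
    have hc1 : z₂ < c := by linarith
    have hcm : c < m := by linarith
    have hcb : c < b := lt_of_lt_of_le hcm ((min_le_left _ _).trans (min_le_left _ _))
    have hcδ : c < z₂ + δ₂ := lt_of_lt_of_le hcm ((min_le_left _ _).trans (min_le_right _ _))
    have hcz₃ : c < z₃ := lt_of_lt_of_le hcm (min_le_right _ _)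
    have hFc : 0 < F c := hpos_right c ⟨hc1, hcδ⟩
    have hac : a < c := by linarith [haz₁, hz₁z₂]
    have hset : {x | x ∈ Icc c b ∧ F x = 0} = Z \ {z₁, z₂} := by
      ext x
      constructor
      · rintro ⟨hx, hFx⟩
        have hx₂ : z₂ < x := lt_of_lt_of_le hc1 hx.1
        refine ⟨⟨⟨hac.le.trans hx.1, hx.2⟩, hFx⟩, ?_⟩
        simp only [Set.mem_insert_iff, Set.mem_singleton_iff]
        push_neg
        exact ⟨(hz₁z₂.trans hx₂).ne', hx₂.ne'⟩
      · rintro ⟨⟨hx, hFx⟩, hne⟩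
        have h3 : z₃ ≤ x := hz₃min x ⟨⟨hx, hFx⟩, hne⟩
        exact ⟨⟨hcz₃.le.trans h3, hx.2⟩, hFx⟩
    have hz₁z₂mem : ({z₁, z₂} : Set ℝ) ⊆ Z := by
      intro w hw
      rcases hw with rfl | hw
      · exact hz₁Z
      · simp only [Set.mem_singleton_iff] at hw
        exact hw ▸ hz₂Z.1
    have hcard2 : ({z₁, z₂} : Set ℝ).ncard = 2 := Set.ncard_pair hz₁z₂.ne
    have hdiff : (Z \ {z₁, z₂}).ncard = n - 2 := by
      rw [Set.ncard_diff hz₁z₂mem, hcard2, hn]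
    have hn2 : 2 ≤ n := by
      rw [← hn, ← hcard2]
      exact Set.ncard_le_ncard hz₁z₂mem hfin
    have hodd : Odd (n - 2) := by
      apply IH (n - 2) (by omega) F c b hcb (hc.mono (Icc_subset_Icc hac.le le_rfl)) hFc hb
        (fun z hz hFz => hchg z ⟨hac.le.trans hz.1, hz.2⟩ hFz)
        (by rw [hset]; exact hfin'')
      rw [hset]; exact hdiff
    obtain ⟨k, hk⟩ := hodd
    exact ⟨k + 1, by omega⟩

open Filter Topology in
/-- If all equilibria of the adaptive dynamics are nondegenerate, then the
set of equilibria in `[0,1]` is finite and has odd cardinality. -/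
theorem adaptive_dynamics_odd_number_of_equilibria
    (pstar : ℝ) (hp0 : 0 < pstar) (hp1 : pstar < 1)
    (π : ℝ → ℝ)
    (hC2 : ContDiffOn ℝ 2 π (Icc 0 1))
    (hmono : AntitoneOn π (Icc 0 1))
    (hπ0 : π 0 = 1)
    (hbd : ∀ p ∈ Icc (0:ℝ) 1, 0 ≤ π p ∧ π p ≤ 1)
    (hvanish : ∀ p ∈ Icc pstar 1, π p = 0)
    (r ε : ℝ) (hr : r ∈ Ioo (0:ℝ) 1) (hε : ε ∈ Icc (0:ℝ) 1)
    (f : ℝ → ℝ)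
    (hf : ∀ P, f P = -r - ε * deriv π P * (1 - P) + π P)
    (hnondeg : ∀ P ∈ Icc (0:ℝ) 1, f P = 0 → deriv f P ≠ 0) :
    {P : ℝ | P ∈ Icc (0:ℝ) 1 ∧ f P = 0}.Finite ∧
    Odd {P : ℝ | P ∈ Icc (0:ℝ) 1 ∧ f P = 0}.ncard := by
  obtain ⟨hr0, hr1⟩ := hr
  obtain ⟨hε0, hε1⟩ := hε
  have hπ1 : π 1 = 0 := hvanish 1 ⟨hp1.le, le_rfl⟩
  set g : ℝ → ℝ := fun x => -r - ε * derivWithin π (Icc 0 1) x * (1 - x) + π x with hgdef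
  have hπcont : ContinuousOn π (Icc 0 1) := hC2.continuousOn
  have hdwcont : ContinuousOn (derivWithin π (Icc 0 1)) (Icc 0 1) :=
    hC2.continuousOn_derivWithin (uniqueDiffOn_Icc one_pos) one_le_two
  have hgcont : ContinuousOn g (Icc 0 1) :=
    (continuousOn_const.sub ((continuousOn_const.mul hdwcont).mul
      (continuousOn_const.sub continuousOn_id))).add hπcont
  have hfg : ∀ x ∈ Ioo (0:ℝ) 1, f x = g x := by
    intro x hx
    rw [hf x, hgdef]
    simp only
    rw [derivWithin_of_mem_nhds (Icc_mem_nhds hx.1 hx.2)]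
  -- limits of slopes of π at 0 are nonpositive
  have hslope : ∀ L : ℝ, Tendsto (slope π 0) (𝓝[Icc 0 1 \ {0}] 0) (𝓝 L) → L ≤ 0 := by
    intro L hL
    have h0cl : (0:ℝ) ∈ closure (Ioc (0:ℝ) 1) := by
      rw [closure_Ioc (zero_ne_one)]
      exact ⟨le_rfl, zero_le_one⟩
    have h1 : (𝓝[Ioc (0:ℝ) 1] (0:ℝ)).NeBot := mem_closure_iff_nhdsWithin_neBot.1 h0cl
    have hne : (𝓝[Icc (0:ℝ) 1 \ {0}] (0:ℝ)).NeBot :=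
      h1.mono (nhdsWithin_mono 0 (fun x hx => ⟨⟨hx.1.le, hx.2⟩, ne_of_gt hx.1⟩))
    refine le_of_tendsto hL ?_
    filter_upwards [self_mem_nhdsWithin] with x hx
    have hx0 : (0:ℝ) < x := lt_of_le_of_ne hx.1.1 (fun h => hx.2 h.symm)
    have hπle : π x ≤ π 0 := hmono (left_mem_Icc.2 zero_le_one) hx.1 hx0.le
    rw [slope_def_field]
    apply div_nonpos_of_nonpos_of_nonneg <;> linarith
  have hdW0 : derivWithin π (Icc 0 1) 0 ≤ 0 := by
    have hd : DifferentiableWithinAt ℝ π (Icc 0 1) 0 :=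
      (hC2.differentiableOn two_ne_zero) 0 (left_mem_Icc.2 zero_le_one)
    exact hslope _ (hasDerivWithinAt_iff_tendsto_slope.1 hd.hasDerivWithinAt)
  have hd0 : deriv π 0 ≤ 0 := by
    by_cases hdiff : DifferentiableAt ℝ π 0
    · exact hslope _ ((hasDerivAt_iff_tendsto_slope.1 hdiff.hasDerivAt).mono_left
        (nhdsWithin_mono 0 (fun x hx => hx.2)))
    · simp [deriv_zero_of_not_differentiableAt hdiff]
  have hεd0 : ε * deriv π 0 ≤ 0 := mul_nonpos_of_nonneg_of_nonpos hε0 hd0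
  have hεdW0 : ε * derivWithin π (Icc 0 1) 0 ≤ 0 := mul_nonpos_of_nonneg_of_nonpos hε0 hdW0
  have hf0 : 0 < f 0 := by rw [hf 0, hπ0]; nlinarith
  have hf1 : f 1 < 0 := by
    have : f 1 = -r := by rw [hf 1, hπ1]; ring
    linarith [this]
  have hg0 : 0 < g 0 := by
    have h : g 0 = -r - ε * derivWithin π (Icc 0 1) 0 * (1 - 0) + π 0 := rfl
    rw [h, hπ0]; nlinarith
  have hg1 : g 1 < 0 := by
    have h : g 1 = -r - ε * derivWithin π (Icc 0 1) 1 * (1 - 1) + π 1 := rfl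
    rw [h, hπ1]; ring_nf; linarith
  -- choose a near 0 with g positive on [0, a]
  have hev0 : ∀ᶠ x in 𝓝[Icc (0:ℝ) 1] 0, 0 < g x :=
    (hgcont 0 (left_mem_Icc.2 zero_le_one)).eventually (eventually_gt_nhds hg0)
  obtain ⟨δa, hδa, hball0⟩ := Metric.mem_nhdsWithin_iff.1 hev0
  have hev1 : ∀ᶠ x in 𝓝[Icc (0:ℝ) 1] 1, g x < 0 :=
    (hgcont 1 (right_mem_Icc.2 zero_le_one)).eventually (eventually_lt_nhds hg1)
  obtain ⟨δb, hδb, hball1⟩ := Metric.mem_nhdsWithin_iff.1 hev1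
  set a : ℝ := min (δa/2) (1/4) with hadef
  set b : ℝ := 1 - min (δb/2) (1/4) with hbdef
  have ha0 : 0 < a := lt_min (by linarith) (by norm_num)
  have ha4 : a ≤ 1/4 := min_le_right _ _
  have hb4 : 3/4 ≤ b := by
    have := min_le_right (δb/2) (1/4); rw [hbdef]; linarith
  have hb1 : b < 1 := by
    have := lt_min (show (0:ℝ) < δb/2 by linarith) (show (0:ℝ) < 1/4 by norm_num)
    rw [hbdef]; linarith
  have hab : a < b := lt_of_le_of_lt ha4 (lt_of_lt_of_le (by norm_num) hb4)
  have hsub : Icc a b ⊆ Ioo (0:ℝ) 1 := fun x hx => ⟨ha0.trans_le hx.1, hx.2.trans_lt hb1⟩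
  have hsub01 : Icc a b ⊆ Icc (0:ℝ) 1 := fun x hx => ⟨(ha0.trans_le hx.1).le, (hx.2.trans_lt hb1).le⟩
  have hpos_near : ∀ x ∈ Icc (0:ℝ) 1, x ≤ a → 0 < g x := by
    intro x hx hxa
    apply hball0
    refine ⟨?_, hx⟩
    rw [Metric.mem_ball, Real.dist_eq]
    rw [abs_of_nonneg (by linarith [hx.1] : (0:ℝ) ≤ x - 0)]
    have := min_le_left (δa/2) (1/4)
    linarith
  have hneg_near : ∀ x ∈ Icc (0:ℝ) 1, b ≤ x → g x < 0 := by
    intro x hx hxb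
    apply hball1
    refine ⟨?_, hx⟩
    rw [Metric.mem_ball, Real.dist_eq]
    rw [abs_of_nonpos (by linarith [hx.2] : x - 1 ≤ 0)]
    have := min_le_left (δb/2) (1/4)
    rw [hbdef] at hxb
    linarith
  have hga : 0 < g a := hpos_near a ⟨ha0.le, by linarith⟩ le_rfl
  have hgb : g b < 0 := hneg_near b ⟨by linarith, hb1.le⟩ le_rfl
  -- identification of the zero sets
  have hZeq : {P : ℝ | P ∈ Icc (0:ℝ) 1 ∧ f P = 0} = {x | x ∈ Icc a b ∧ g x = 0} := by
    ext x
    constructor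
    · rintro ⟨hx, hfx⟩
      have hx0 : x ≠ 0 := fun h => hf0.ne' (h ▸ hfx)
      have hx1 : x ≠ 1 := fun h => hf1.ne (h ▸ hfx)
      have hxo : x ∈ Ioo (0:ℝ) 1 := ⟨hx.1.lt_of_ne (Ne.symm hx0), hx.2.lt_of_ne hx1⟩
      have hgx : g x = 0 := by rw [← hfg x hxo]; exact hfx
      refine ⟨⟨?_, ?_⟩, hgx⟩
      · by_contra h
        push_neg at h
        exact (hpos_near x hx h.le).ne' hgx
      · by_contra h
        push_neg at h
        exact (hneg_near x hx h.le).ne hgx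
    · rintro ⟨hx, hgx⟩
      have hxo : x ∈ Ioo (0:ℝ) 1 := hsub hx
      exact ⟨hsub01 hx, by rw [hfg x hxo]; exact hgx⟩
  -- nondegeneracy gives a local sign change for g at each zero in [a,b]
  have hchg : ∀ z ∈ Icc a b, g z = 0 → ∃ δ > 0, ∃ s : ℝ, (s = 1 ∨ s = -1) ∧
      ∀ x ∈ Ioo (z - δ) (z + δ), x ≠ z → 0 < s * (g x * (x - z)) := by
    intro z hz hgz
    have hzo : z ∈ Ioo (0:ℝ) 1 := hsub hz
    have hz01 : z ∈ Icc (0:ℝ) 1 := hsub01 hz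
    have hfz : f z = 0 := by rw [hfg z hzo]; exact hgz
    have hder : deriv f z ≠ 0 := hnondeg z hz01 hfz
    have hdiff : DifferentiableAt ℝ f z := by
      by_contra h
      exact hder (deriv_zero_of_not_differentiableAt h)
    have hslopet : Tendsto (slope f z) (𝓝[≠] z) (𝓝 (deriv f z)) :=
      hasDerivAt_iff_tendsto_slope.1 hdiff.hasDerivAt
    have hkey : ∀ s : ℝ, (s = 1 ∨ s = -1) →
        (∀ᶠ x in 𝓝[≠] z, 0 < s * slope f z x) →
        ∃ δ > 0, ∃ s : ℝ, (s = 1 ∨ s = -1) ∧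
          ∀ x ∈ Ioo (z - δ) (z + δ), x ≠ z → 0 < s * (g x * (x - z)) := by
      intro s hs hev
      obtain ⟨δ₀, hδ₀, hb₀⟩ := Metric.mem_nhdsWithin_iff.1 hev
      refine ⟨min δ₀ (min z (1 - z)), lt_min hδ₀ (lt_min hzo.1 (by linarith [hzo.2])), s, hs, ?_⟩
      intro x hx hxz
      have hδz : min δ₀ (min z (1 - z)) ≤ z := (min_le_right _ _).trans (min_le_left _ _)
      have hδz' : min δ₀ (min z (1 - z)) ≤ 1 - z := (min_le_right _ _).trans (min_le_right _ _)
      have hδ₀' : min δ₀ (min z (1 - z)) ≤ δ₀ := min_le_left _ _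
      have hxo : x ∈ Ioo (0:ℝ) 1 := ⟨by linarith [hx.1], by linarith [hx.2]⟩
      have hdist : x ∈ Metric.ball z δ₀ := by
        rw [Metric.mem_ball, Real.dist_eq, abs_sub_lt_iff]
        constructor <;> linarith [hx.1, hx.2]
      have hsl := hb₀ ⟨hdist, hxz⟩
      simp only [Set.mem_setOf_eq] at hsl
      rw [slope_def_field, hfz, sub_zero] at hsl
      have hgfx : g x = f x := (hfg x hxo).symm
      rw [hgfx]
      rcases ne_or_eq x z with hne | rfl
      · rcases hs with rfl | rfl
        · rw [one_mul] at hsl ⊢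
          rcases div_pos_iff.1 hsl with ⟨h1, h2⟩ | ⟨h1, h2⟩
          · exact mul_pos h1 h2
          · exact mul_pos_of_neg_of_neg h1 h2
        · have hsl' : f x / (x - z) < 0 := by linarith
          have : f x * (x - z) < 0 := by
            rcases div_neg_iff.1 hsl' with ⟨h1, h2⟩ | ⟨h1, h2⟩
            · exact mul_neg_of_pos_of_neg h1 h2
            · exact mul_neg_of_neg_of_pos h1 h2
          linarith
      · exact absurd rfl hxz
    rcases lt_or_gt_of_ne hder with hneg | hpos
    · refine hkey (-1) (Or.inr rfl) ?_
      have hevs := hslopet.eventually (eventually_lt_nhds hneg)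
      filter_upwards [hevs] with x hx
      linarith
    · refine hkey 1 (Or.inl rfl) ?_
      have hevs := hslopet.eventually (eventually_gt_nhds hpos)
      filter_upwards [hevs] with x hx
      linarith
  -- the zero set of g on [a,b] is finite
  have hgcont' : ContinuousOn g (Icc a b) := hgcont.mono hsub01
  have hseteq : {x | x ∈ Icc a b ∧ g x = 0} = Icc a b ∩ g ⁻¹' {0} := by
    ext x
    simp [Set.mem_inter_iff, Set.mem_setOf_eq]
  have hclosed : IsClosed (Icc a b ∩ g ⁻¹' {0}) :=
    hgcont'.preimage_isClosed_of_isClosed isClosed_Icc isClosed_singleton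
  have hgfin : {x | x ∈ Icc a b ∧ g x = 0}.Finite := by
    by_contra hinf
    have hinf' : {x | x ∈ Icc a b ∧ g x = 0}.Infinite := hinf
    obtain ⟨x, hxK, hacc⟩ := hinf'.exists_accPt_of_subset_isCompact isCompact_Icc
      (fun y hy => hy.1)
    have hxcl : x ∈ closure {x | x ∈ Icc a b ∧ g x = 0} :=
      mem_closure_iff_clusterPt.2 (AccPt.clusterPt hacc)
    have hxS : x ∈ {x | x ∈ Icc a b ∧ g x = 0} := by
      rw [hseteq]
      rw [hseteq] at hxcl
      exact hclosed.closure_subset hxcl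
    obtain ⟨δ, hδ, s, hs, hsgn⟩ := hchg x hxS.1 hxS.2
    obtain ⟨y, ⟨hyball, hyS⟩, hyx⟩ :=
      accPt_iff_nhds.1 hacc (Metric.ball x δ) (Metric.ball_mem_nhds x hδ)
    have hy : y ∈ Ioo (x - δ) (x + δ) := by
      rw [Metric.mem_ball, Real.dist_eq, abs_sub_lt_iff] at hyball
      constructor <;> linarith [hyball.1, hyball.2]
    have hcontr := hsgn y hy hyx
    rw [hyS.2] at hcontr
    simp at hcontr
  constructor
  · rw [hZeq]; exact hgfin
  · rw [hZeq]
    exact parity_aux _ g a b hab hgcont' hga hgb hchg hgfin rfl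
end
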